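/- For oriented circles C₀, C₁ in the plane with centers c₀, c₁, radii r₀, r₁ > 0, intersecting at angle φ* (meaning |c₀ − c₁|² = r₀² + r₁² + 2r₀r₁cos φ*, with φ* ∈ (0,π)), the angle ψ₀₁ at the center c₀ subtended by the two intersection points satisfies exp(iψ₀₁) = (r₀ + r₁ exp(iφ*)) / (r₀ + r₁ exp(−iφ*)). -/

import Mathlib

open Complex

/-- For two circles in `ℂ` with centers `c₀, c₁`, radii `r₀, r₁ > 0`, intersecting at
angle `φ* ∈ (0,π)` (i.e. `|c₀−c₁|² = r₀² + r₁² + 2r₀r₁cos φ*`), there are two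
intersection points `p, q`, and with a suitable labelling the angle at the center `c₀`
subtended by them satisfies `(q−c₀)/(p−c₀) = (r₀ + r₁e^{iφ*})/(r₀ + r₁e^{−iφ*})`. -/
theorem circle_intersection_center_angle
    (c0 c1 : ℂ) (r0 r1 : ℝ) (hr0 : 0 < r0) (hr1 : 0 < r1)
    (φ : ℝ) (hφ0 : 0 < φ) (hφπ : φ < Real.pi)
    (hangle : ‖c0 - c1‖ ^ 2 =
      r0 ^ 2 + r1 ^ 2 + 2 * r0 * r1 * Real.cos φ) :
    ∃ p q : ℂ,
      ‖p - c0‖ = r0 ∧ ‖p - c1‖ = r1 ∧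
      ‖q - c0‖ = r0 ∧ ‖q - c1‖ = r1 ∧
      p ≠ q ∧
      (q - c0) / (p - c0) =
        ((r0 : ℂ) + (r1 : ℂ) * Complex.exp (φ * I)) /
          ((r0 : ℂ) + (r1 : ℂ) * Complex.exp (-(φ : ℂ) * I)) := by
  set z : ℂ := (r0 : ℂ) + (r1 : ℂ) * Complex.exp (φ * I) with hz_def
  have hsin : 0 < Real.sin φ := Real.sin_pos_of_pos_of_lt_pi hφ0 hφπ
  have hexp : Complex.exp ((φ : ℂ) * I) = (Real.cos φ : ℂ) + (Real.sin φ : ℂ) * I := by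
    rw [Complex.exp_mul_I, Complex.ofReal_cos, Complex.ofReal_sin]
  have hzre : z = ((r0 + r1 * Real.cos φ : ℝ) : ℂ) + ((r1 * Real.sin φ : ℝ) : ℂ) * I := by
    rw [hz_def, hexp]; push_cast; ring
  have hzim : z.im = r1 * Real.sin φ := by
    rw [hzre]
    simp only [Complex.add_im, Complex.ofReal_im, Complex.mul_im, Complex.ofReal_re,
      Complex.I_im, Complex.I_re]
    ring
  have hz0 : z ≠ 0 := by
    intro h
    have : z.im = 0 := by rw [h]; simp
    rw [hzim] at this
    nlinarith
  have habsz0 : ‖z‖ ≠ 0 := norm_ne_zero_iff.mpr hz0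
  have habsz : ‖z‖ ^ 2 = r0 ^ 2 + r1 ^ 2 + 2 * r0 * r1 * Real.cos φ := by
    rw [Complex.sq_norm, hzre, Complex.normSq_add_mul_I]
    nlinarith [Real.sin_sq_add_cos_sq φ]
  set d : ℂ := c1 - c0 with hd_def
  have habsd : ‖d‖ = ‖z‖ := by
    have h1 : ‖d‖ ^ 2 = ‖z‖ ^ 2 := by
      rw [habsz, ← hangle, show c0 - c1 = -d by ring]
      simp
    nlinarith [norm_nonneg d, norm_nonneg z]
  have hd0 : d ≠ 0 := by
    intro h
    rw [h] at habsd
    simp at habsd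
    exact habsz0 habsd.symm
  have hconjz : (starRingEnd ℂ) z = (r0 : ℂ) + (r1 : ℂ) * Complex.exp (-(φ : ℂ) * I) := by
    rw [hz_def]
    simp [map_add, map_mul, ← Complex.exp_conj]
  have hconjz0 : (starRingEnd ℂ) z ≠ 0 := by simpa using hz0
  have hr0d : (r0 : ℂ) * d ≠ 0 :=
    mul_ne_zero (by exact_mod_cast hr0.ne') hd0
  refine ⟨c0 + (r0 : ℂ) * d / z, c0 + (r0 : ℂ) * d / (starRingEnd ℂ) z, ?_, ?_, ?_, ?_, ?_, ?_⟩
  · rw [show c0 + (r0 : ℂ) * d / z - c0 = (r0 : ℂ) * d / z by ring]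
    rw [norm_div, norm_mul, habsd, Complex.norm_real, Real.norm_eq_abs, mul_div_assoc, div_self habsz0,
      mul_one, abs_of_pos hr0]
  · have h1 : c0 + (r0 : ℂ) * d / z - c1 = d * ((r0 : ℂ) - z) / z := by
      field_simp; ring
    have h2 : (r0 : ℂ) - z = -((r1 : ℂ) * Complex.exp (φ * I)) := by rw [hz_def]; ring
    rw [h1, h2, norm_div, norm_mul, norm_neg, norm_mul, habsd, Complex.norm_real, Real.norm_eq_abs,
      Complex.norm_exp_ofReal_mul_I, mul_one, mul_comm, mul_div_assoc, div_self habsz0,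
      mul_one, abs_of_pos hr1]
  · rw [show c0 + (r0 : ℂ) * d / (starRingEnd ℂ) z - c0 = (r0 : ℂ) * d / (starRingEnd ℂ) z by ring]
    rw [norm_div, norm_mul, habsd, Complex.norm_conj, Complex.norm_real, Real.norm_eq_abs, mul_div_assoc,
      div_self habsz0, mul_one, abs_of_pos hr0]
  · have h1 : c0 + (r0 : ℂ) * d / (starRingEnd ℂ) z - c1
        = d * ((r0 : ℂ) - (starRingEnd ℂ) z) / (starRingEnd ℂ) z := by
      field_simp; ring
    have h2 : (r0 : ℂ) - (starRingEnd ℂ) z = -((r1 : ℂ) * Complex.exp (-(φ : ℂ) * I)) := by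
      rw [hconjz]; ring
    have h3 : ‖Complex.exp (-(φ : ℂ) * I)‖ = 1 := by
      rw [show -(φ : ℂ) * I = ((-φ : ℝ) : ℂ) * I by push_cast; ring]
      exact Complex.norm_exp_ofReal_mul_I _
    rw [h1, h2, norm_div, norm_mul, norm_neg, norm_mul, habsd, Complex.norm_conj,
      Complex.norm_real, Real.norm_eq_abs, h3, mul_one, mul_comm, mul_div_assoc, div_self habsz0,
      mul_one, abs_of_pos hr1]
  · intro h
    have h1 : (r0 : ℂ) * d / z = (r0 : ℂ) * d / (starRingEnd ℂ) z := add_left_cancel h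
    rw [div_eq_div_iff hz0 hconjz0] at h1
    have h2 : (starRingEnd ℂ) z = z := mul_left_cancel₀ hr0d h1
    have h3 : z.im = 0 := by
      have := congrArg Complex.im h2
      simp at this
      linarith
    rw [hzim] at h3
    nlinarith
  · rw [show c0 + (r0 : ℂ) * d / (starRingEnd ℂ) z - c0 = (r0 : ℂ) * d / (starRingEnd ℂ) z by ring,
        show c0 + (r0 : ℂ) * d / z - c0 = (r0 : ℂ) * d / z by ring, ← hconjz]
    field_simp [Complex.ofReal_ne_zero.mpr hr0.ne']
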